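/- With the same hypotheses, for any subset A of indices, the change in equilibrium actions restricted to A is Δx*_A = M_{AS}(G) Δθ*_S, and the change in aggregate action is Δx* = b_S(G,1)ᵀ Δθ*_S, where Δθ*_S = δ C_{SS} (I - δ M_{SS}(G) C_{SS})^{-1} b_S(G, θ). -/
import Mathlib


open Matrix

/-- The block of a matrix with rows in `S` and columns in `T`. -/
def blk {n : ℕ} (A : Matrix (Fin n) (Fin n) ℝ) (S T : Finset (Fin n)) :
    Matrix {x // x ∈ S} {x // x ∈ T} ℝ :=
  A.submatrix Subtype.val Subtype.val

/-- Restriction of a vector to the coordinates in `S`. -/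
def restr {n : ℕ} (v : Fin n → ℝ) (S : Finset (Fin n)) : {x // x ∈ S} → ℝ :=
  fun i => v i.val

lemma restr_mulVec_supported {n : ℕ} (P : Matrix (Fin n) (Fin n) ℝ)
    (w : Fin n → ℝ) (S A : Finset (Fin n)) (hw : ∀ j ∉ S, w j = 0) :
    restr (P *ᵥ w) A = blk P A S *ᵥ restr w S := by
  funext i
  simp only [restr, blk, mulVec, dotProduct, submatrix_apply]
  rw [Finset.sum_coe_sort S (fun j => P i.val j * w j)]
  exact (Finset.sum_subset (Finset.subset_univ S)
    (fun x _ hx => by rw [hw x hx, mul_zero])).symm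

theorem effects_of_structural_intervention {n : ℕ} (G C : Matrix (Fin n) (Fin n) ℝ) (δ : ℝ)
    (θ : Fin n → ℝ) (S : Finset (Fin n)) (hsymG : G.IsSymm) (hsymC : C.IsSymm)
    (hsupp : ∀ i j, (i ∉ S ∨ j ∉ S) → C i j = 0)
    (h1 : IsUnit (1 - δ • G)) (h2 : IsUnit (1 - δ • (G + C)))
    (h3 : IsUnit (1 - δ • (blk ((1 - δ • G)⁻¹) S S * blk C S S))) :
    (∀ A : Finset (Fin n),
      restr (((1 - δ • (G + C))⁻¹ *ᵥ θ) - ((1 - δ • G)⁻¹ *ᵥ θ)) A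
        = blk ((1 - δ • G)⁻¹) A S *ᵥ
            (δ • (blk C S S *ᵥ
              ((1 - δ • (blk ((1 - δ • G)⁻¹) S S * blk C S S))⁻¹ *ᵥ
                restr ((1 - δ • G)⁻¹ *ᵥ θ) S)))) ∧
    (∑ i, (((1 - δ • (G + C))⁻¹ *ᵥ θ) i - ((1 - δ • G)⁻¹ *ᵥ θ) i))
      = restr ((1 - δ • G)⁻¹ *ᵥ fun _ => 1) S ⬝ᵥ
          (δ • (blk C S S *ᵥ
            ((1 - δ • (blk ((1 - δ • G)⁻¹) S S * blk C S S))⁻¹ *ᵥ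
              restr ((1 - δ • G)⁻¹ *ᵥ θ) S))) := by
  set M := (1 - δ • G)⁻¹ with hM
  set K := (1 - δ • (blk M S S * blk C S S)) with hK
  set u := K⁻¹ *ᵥ restr (M *ᵥ θ) S with hu
  set ut : Fin n → ℝ := fun j => if h : j ∈ S then u ⟨j, h⟩ else 0 with hut
  have hut0 : ∀ j ∉ S, ut j = 0 := fun j hj => dif_neg hj
  have hutS : restr ut S = u := funext fun j => dif_pos j.2
  have hCw : ∀ j ∉ S, (C *ᵥ ut) j = 0 := by
    intro j hj
    simp only [mulVec, dotProduct]
    exact Finset.sum_eq_zero fun k _ => by rw [hsupp j k (Or.inl hj), zero_mul]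
  have hd1 : IsUnit (1 - δ • G).det := (isUnit_iff_isUnit_det _).mp h1
  have hd2 : IsUnit (1 - δ • (G + C)).det := (isUnit_iff_isUnit_det _).mp h2
  have hd3 : IsUnit K.det := (isUnit_iff_isUnit_det _).mp h3
  have hMinv : (1 - δ • G) * M = 1 := mul_nonsing_inv _ hd1
  have hKu : K *ᵥ u = restr (M *ᵥ θ) S := by
    rw [hu, mulVec_mulVec, mul_nonsing_inv _ hd3, one_mulVec]
  set x := M *ᵥ θ + δ • (M *ᵥ (C *ᵥ ut)) with hx
  have hrC : restr (C *ᵥ ut) S = blk C S S *ᵥ u := by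
    rw [restr_mulVec_supported C ut S S hut0, hutS]
  have hrxS : restr x S = u := by
    have e1 : restr x S = restr (M *ᵥ θ) S + δ • restr (M *ᵥ (C *ᵥ ut)) S := rfl
    rw [e1, restr_mulVec_supported M _ S S hCw, hrC, mulVec_mulVec]
    have e2 : K *ᵥ u = u - δ • ((blk M S S * blk C S S) *ᵥ u) := by
      rw [hK, sub_mulVec, one_mulVec, smul_mulVec]
    rw [← hKu, e2]
    abel
  have hCx : C *ᵥ x = C *ᵥ ut := by
    funext i
    simp only [mulVec, dotProduct]
    refine Finset.sum_congr rfl fun j _ => ?_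
    by_cases hj : j ∈ S
    · have : x j = ut j := by
        have h1' := congrFun hrxS ⟨j, hj⟩
        have h2' := congrFun hutS ⟨j, hj⟩
        simp only [restr] at h1' h2'
        rw [h1', h2']
      rw [this]
    · rw [hsupp i j (Or.inr hj), zero_mul, zero_mul]
  have hLx : (1 - δ • (G + C)) *ᵥ x = θ := by
    have hsplit : (1 : Matrix (Fin n) (Fin n) ℝ) - δ • (G + C) = (1 - δ • G) - δ • C := by
      rw [smul_add]; abel
    rw [hsplit, sub_mulVec]
    have h1' : (1 - δ • G) *ᵥ x = θ + δ • (C *ᵥ ut) := by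
      rw [hx, mulVec_add, mulVec_smul, mulVec_mulVec, mulVec_mulVec, hMinv, one_mulVec,
        one_mulVec]
    rw [h1', smul_mulVec, hCx]
    abel
  have hNθ : (1 - δ • (G + C))⁻¹ *ᵥ θ = x := by
    rw [← hLx, mulVec_mulVec, nonsing_inv_mul _ hd2, one_mulVec]
  have hΔ : (1 - δ • (G + C))⁻¹ *ᵥ θ - M *ᵥ θ = δ • (M *ᵥ (C *ᵥ ut)) := by
    rw [hNθ, hx]; abel
  constructor
  · intro A
    have e1 : restr ((1 - δ • (G + C))⁻¹ *ᵥ θ - M *ᵥ θ) A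
        = δ • restr (M *ᵥ (C *ᵥ ut)) A := by rw [hΔ]; rfl
    rw [e1, restr_mulVec_supported M _ S A hCw, hrC, mulVec_smul]
  · have hMsym : M.IsSymm := by
      rw [hM, Matrix.IsSymm, transpose_nonsing_inv]
      congr 1
      rw [transpose_sub, transpose_one, transpose_smul, hsymG]
    have e : ∀ i, ((1 - δ • (G + C))⁻¹ *ᵥ θ) i - (M *ᵥ θ) i
        = δ * (M *ᵥ (C *ᵥ ut)) i := by
      intro i
      have := congrFun hΔ i
      simpa using this
    simp_rw [e]
    rw [← Finset.mul_sum]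
    have hsum : ∑ i, (M *ᵥ (C *ᵥ ut)) i
        = ∑ j, (M *ᵥ fun _ => (1:ℝ)) j * (C *ᵥ ut) j := by
      simp only [mulVec, dotProduct, mul_one]
      rw [Finset.sum_comm]
      refine Finset.sum_congr rfl fun j _ => ?_
      rw [← Finset.sum_mul]
      congr 1
      exact Finset.sum_congr rfl fun i _ => (congrFun (congrFun hMsym i) j).symm
    have hfin : ∑ j, (M *ᵥ fun _ => (1:ℝ)) j * (C *ᵥ ut) j
        = restr (M *ᵥ fun _ => (1:ℝ)) S ⬝ᵥ restr (C *ᵥ ut) S := by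
      simp only [dotProduct, restr]
      rw [Finset.sum_coe_sort S (fun j => (M *ᵥ fun _ => (1:ℝ)) j * (C *ᵥ ut) j)]
      exact (Finset.sum_subset (Finset.subset_univ S)
        (fun j _ hj => by rw [hCw j hj, mul_zero])).symm
    rw [hsum, hfin, hrC, dotProduct_smul, smul_eq_mul]
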